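/- Squared-kernel second moment asymptotic (constant C₃): as h → 0⁺, the D×D-matrix-valued integral h^{-(d+2)} ∫_{B̄(0,r)} K((φ(z) − x)/h)² (φ(z) − x)(φ(z) − x)^T v(φ(z)) f(z) dz converges entrywise to f(0) · v(x) · ∫_{ℝ^d} K(L u)² (L u)(L u)^T du. -/

import Mathlib

open MeasureTheory Metric Filter

lemma euclid_abs_coord_le_norm {D : ℕ} (w : EuclideanSpace ℝ (Fin D)) (a : Fin D) :
    |w a| ≤ ‖w‖ := by
  rw [EuclideanSpace.norm_eq]
  have h1 : |w a| = Real.sqrt (‖w a‖ ^ 2) := by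
    rw [Real.sqrt_sq_eq_abs, Real.norm_eq_abs, abs_abs]
  rw [h1]
  apply Real.sqrt_le_sqrt
  exact Finset.single_le_sum (f := fun i => ‖w i‖ ^ 2) (fun i _ => sq_nonneg _)
    (Finset.mem_univ a)

set_option maxHeartbeats 1000000 in
/-- Squared-kernel second moment asymptotic (constant C₃): as `h → 0⁺`, entrywise,
`h^(-(d+2)) ∫_{B̄(0,r)} K((φ z − x)/h)² (φ z − x)(φ z − x)ᵀ v(φ z) f z dz
  → f 0 · v x · ∫_{ℝ^d} K(L u)² (L u)(L u)ᵀ du`. -/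
theorem squared_kernel_second_moment_C3
    (d D : ℕ) (hd : 0 < d) (hdD : d ≤ D) (r : ℝ) (hr : 0 < r)
    (φ : EuclideanSpace ℝ (Fin d) → EuclideanSpace ℝ (Fin D))
    (hφ : ContDiff ℝ 1 φ)
    (c C : ℝ) (hc : 0 < c) (hcC : c ≤ C)
    (hbil : ∀ z ∈ closedBall (0 : EuclideanSpace ℝ (Fin d)) r,
      ∀ z' ∈ closedBall (0 : EuclideanSpace ℝ (Fin d)) r,
        c * ‖z - z'‖ ≤ ‖φ z - φ z'‖ ∧ ‖φ z - φ z'‖ ≤ C * ‖z - z'‖)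
    (hL : Function.Injective (fderiv ℝ φ 0))
    (f : EuclideanSpace ℝ (Fin d) → ℝ)
    (hf_meas : Measurable f)
    (hf_nonneg : ∀ z, 0 ≤ f z)
    (hf_supp : ∀ z ∉ closedBall (0 : EuclideanSpace ℝ (Fin d)) r, f z = 0)
    (hf_bdd : ∃ M : ℝ, ∀ z, f z ≤ M)
    (hf_prob : ∫ z, f z = 1)
    (hf_cont : ContinuousAt f 0) (hf_pos : 0 < f 0)
    (K : EuclideanSpace ℝ (Fin D) → ℝ)
    (hK_nonneg : ∀ u, 0 ≤ K u) (hK_cont : Continuous K)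
    (hK_supp : HasCompactSupport K)
    (v : EuclideanSpace ℝ (Fin D) → ℝ)
    (hv_nonneg : ∀ y, 0 ≤ v y)
    (hv_bdd : ∃ M : ℝ, ∀ y, v y ≤ M)
    (hv_meas : Measurable v)
    (hv_cont : ContinuousAt v (φ 0)) :
    ∀ a b : Fin D,
      Tendsto
        (fun h : ℝ =>
          (∫ z in closedBall (0 : EuclideanSpace ℝ (Fin d)) r,
              K (h⁻¹ • (φ z - φ 0)) ^ 2 * ((φ z - φ 0) a * (φ z - φ 0) b) *
                v (φ z) * f z) / h ^ (d + 2))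
        (nhdsWithin 0 (Set.Ioi 0))
        (nhds (f 0 * v (φ 0) *
          ∫ u, K (fderiv ℝ φ 0 u) ^ 2 *
            (fderiv ℝ φ 0 u a * fderiv ℝ φ 0 u b))) := by
  intro a b
  have hder : HasFDerivAt φ (fderiv ℝ φ 0) 0 :=
    ((hφ.differentiable one_ne_zero) 0).hasFDerivAt
  set x := φ 0 with hx
  set L := fderiv ℝ φ 0 with hLdef
  obtain ⟨Mf, hMf⟩ := hf_bdd
  obtain ⟨Mv, hMv⟩ := hv_bdd
  have hMf0 : 0 ≤ Mf := (hf_nonneg 0).trans (hMf 0)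
  have hMv0 : 0 ≤ Mv := (hv_nonneg x).trans (hMv x)
  obtain ⟨MK, hMK⟩ := hK_supp.exists_bound_of_continuous hK_cont
  have hMK' : ∀ y, K y ≤ MK := fun y =>
    (le_abs_self _).trans (by simpa [Real.norm_eq_abs] using hMK y)
  have hMK0 : 0 ≤ MK := (norm_nonneg _).trans (hMK x)
  obtain ⟨R0, hR0⟩ := (hK_supp.isBounded).subset_closedBall 0
  set R := max R0 1 with hRdef
  have hRpos : (0:ℝ) < R := lt_of_lt_of_le one_pos (le_max_right _ _)
  have hKz : ∀ y : EuclideanSpace ℝ (Fin D), R < ‖y‖ → K y = 0 := by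
    intro y hy
    by_contra hne
    have hmem : y ∈ tsupport K := subset_tsupport K (Function.mem_support.2 hne)
    have : ‖y‖ ≤ R0 := mem_closedBall_zero_iff.1 (hR0 hmem)
    exact absurd (hy.trans_le this) (not_lt.2 (le_max_left _ _))
  set S := closedBall (0 : EuclideanSpace ℝ (Fin d)) r with hS
  set g : ℝ → EuclideanSpace ℝ (Fin d) → ℝ := fun h z =>
    K (h⁻¹ • (φ z - x)) ^ 2 *
      ((h⁻¹ • (φ z - x)) a * (h⁻¹ • (φ z - x)) b) * v (φ z) * f z with hg
  set G : ℝ → EuclideanSpace ℝ (Fin d) → ℝ := fun h u => S.indicator (g h) (h • u) with hG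
  set lim : EuclideanSpace ℝ (Fin d) → ℝ := fun u =>
    K (L u) ^ 2 * (L u a * L u b) * v x * f 0 with hlim
  set bound : EuclideanSpace ℝ (Fin d) → ℝ :=
    (closedBall (0 : EuclideanSpace ℝ (Fin d)) (R / c)).indicator
      (fun _ => MK ^ 2 * (R * R) * Mv * Mf) with hbound
  have hbound_nonneg : ∀ u, 0 ≤ bound u := by
    intro u
    apply Set.indicator_nonneg
    intro y _
    positivity
  have key : Tendsto (fun h => ∫ u, G h u) (nhdsWithin 0 (Set.Ioi 0))
      (nhds (∫ u, lim u)) := by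
    apply tendsto_integral_filter_of_dominated_convergence bound
    · -- measurability
      apply Filter.Eventually.of_forall
      intro h
      have m1 : Measurable fun z : EuclideanSpace ℝ (Fin d) => h⁻¹ • (φ z - x) :=
        (by fun_prop : Continuous fun z : EuclideanSpace ℝ (Fin d) => h⁻¹ • (φ z - x)).measurable
      have hgmeas : Measurable (g h) := by
        exact ((((hK_cont.measurable.comp m1).pow_const 2).mul
          (((EuclideanSpace.proj a).continuous.measurable.comp m1).mul
            ((EuclideanSpace.proj b).continuous.measurable.comp m1))).mul
          (hv_meas.comp hφ.continuous.measurable)).mul hf_meas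
      exact ((hgmeas.indicator measurableSet_closedBall).comp
        ((continuous_const_smul h).measurable)).aestronglyMeasurable
    · -- bound
      filter_upwards [self_mem_nhdsWithin] with h hh
      apply Filter.Eventually.of_forall
      intro u
      have hh0 : (0:ℝ) < h := hh
      by_cases hmem : h • u ∈ S
      · have hGval : G h u = g h (h • u) := Set.indicator_of_mem hmem _
        rw [hGval]
        set w := h⁻¹ • (φ (h • u) - x) with hw
        by_cases hKw : K w = 0
        · have hzero : g h (h • u) = 0 := by
            simp only [hg]
            rw [← hw, hKw]
            ring
          rw [hzero, norm_zero]
          exact hbound_nonneg u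
        · have hwR : ‖w‖ ≤ R := by
            by_contra hcon
            exact hKw (hKz w (lt_of_not_ge hcon))
          -- lower bi-Lipschitz gives u ∈ closedBall 0 (R/c)
          have hlow := (hbil (h • u) hmem 0 (mem_closedBall_self hr.le)).1
          have hnorm_w : ‖w‖ = h⁻¹ * ‖φ (h • u) - x‖ := by
            rw [hw, norm_smul, Real.norm_eq_abs, abs_of_pos (inv_pos.2 hh0)]
          have hphi_le : ‖φ (h • u) - x‖ ≤ R * h := by
            have := hwR
            rw [hnorm_w] at this
            calc ‖φ (h • u) - x‖ = h * (h⁻¹ * ‖φ (h • u) - x‖) := by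
                  field_simp
              _ ≤ h * R := by
                  exact mul_le_mul_of_nonneg_left this hh0.le
              _ = R * h := mul_comm _ _
          have hu_le : ‖u‖ ≤ R / c := by
            have h1 : c * (h * ‖u‖) ≤ R * h := by
              have h2 : c * ‖h • u - 0‖ ≤ ‖φ (h • u) - x‖ := hlow
              rw [sub_zero, norm_smul, Real.norm_eq_abs, abs_of_pos hh0] at h2
              exact h2.trans hphi_le
            rw [le_div_iff₀ hc]
            nlinarith
          have humem : u ∈ closedBall (0 : EuclideanSpace ℝ (Fin d)) (R / c) :=
            mem_closedBall_zero_iff.2 hu_le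
          have hbval : bound u = MK ^ 2 * (R * R) * Mv * Mf :=
            Set.indicator_of_mem humem _
          rw [hbval]
          have hwa : |w a| ≤ R := (euclid_abs_coord_le_norm w a).trans hwR
          have hwb : |w b| ≤ R := (euclid_abs_coord_le_norm w b).trans hwR
          have hK2 : K w ^ 2 ≤ MK ^ 2 := pow_le_pow_left₀ (hK_nonneg w) (hMK' w) 2
          have habs' : |w a * w b| ≤ R * R := by
            rw [abs_mul]
            exact mul_le_mul hwa hwb (abs_nonneg _) hRpos.le
          have hval : ‖g h (h • u)‖
              = K w ^ 2 * |w a * w b| * v (φ (h • u)) * f (h • u) := by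
            simp only [hg]
            rw [← hw, Real.norm_eq_abs, abs_mul, abs_mul, abs_mul,
              abs_of_nonneg (sq_nonneg (K w)), abs_of_nonneg (hv_nonneg _),
              abs_of_nonneg (hf_nonneg _)]
          rw [hval]
          have hRR : (0:ℝ) ≤ R * R := mul_nonneg hRpos.le hRpos.le
          have hMK2 : (0:ℝ) ≤ MK ^ 2 := sq_nonneg _
          exact mul_le_mul
            (mul_le_mul
              (mul_le_mul hK2 habs' (abs_nonneg _) hMK2)
              (hMv _) (hv_nonneg _) (mul_nonneg hMK2 hRR))
            (hMf _) (hf_nonneg _)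
            (mul_nonneg (mul_nonneg hMK2 hRR) hMv0)
      · have hzero : G h u = 0 := Set.indicator_of_notMem hmem _
        rw [hzero, norm_zero]
        exact hbound_nonneg u
    · -- integrability of bound
      rw [hbound, integrable_indicator_iff measurableSet_closedBall]
      exact integrableOn_const measure_closedBall_lt_top.ne
    · -- pointwise limit
      apply ae_of_all
      intro u
      have hmem : ∀ᶠ h in nhdsWithin (0:ℝ) (Set.Ioi 0), h • u ∈ S := by
        have hε : (0:ℝ) < r / (‖u‖ + 1) := by positivity
        filter_upwards [Ioo_mem_nhdsGT_of_mem (Set.left_mem_Ico.2 hε)] with h hh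
        have h0 : (0:ℝ) < h := hh.1
        have hlt : h < r / (‖u‖ + 1) := hh.2
        have : ‖h • u‖ ≤ r := by
          rw [norm_smul, Real.norm_eq_abs, abs_of_pos h0]
          have h4 : h * (‖u‖ + 1) < r := (lt_div_iff₀ (by positivity)).1 hlt
          have h5 : h * ‖u‖ ≤ h * (‖u‖ + 1) :=
            mul_le_mul_of_nonneg_left (by linarith) h0.le
          linarith
        exact mem_closedBall_zero_iff.2 this
      have hslope : Tendsto (fun h : ℝ => h⁻¹ • (φ (h • u) - x))
          (nhdsWithin 0 (Set.Ioi 0)) (nhds (L u)) := by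
        have h1 : HasDerivAt (fun t : ℝ => t • u) u 0 := by
          simpa using (hasDerivAt_id (0:ℝ)).smul_const u
        have hder' : HasFDerivAt φ L ((0:ℝ) • u) := by rw [zero_smul]; exact hder
        have h2 : HasDerivAt (fun t : ℝ => φ (t • u)) (L u) 0 :=
          hder'.comp_hasDerivAt 0 h1
        have h3 := hasDerivAt_iff_tendsto_slope.1 h2
        have h4 : Tendsto (slope (fun t : ℝ => φ (t • u)) 0)
            (nhdsWithin 0 (Set.Ioi 0)) (nhds (L u)) :=
          h3.mono_left (nhdsWithin_mono 0 (fun t ht => ne_of_gt ht))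
        refine h4.congr ?_
        intro h
        simp [slope, zero_smul, hx, vsub_eq_sub]
      have hsmul0 : Tendsto (fun h : ℝ => h • u) (nhdsWithin 0 (Set.Ioi 0))
          (nhds 0) := by
        have : Tendsto (fun h : ℝ => h • u) (nhds 0) (nhds ((0:ℝ) • u)) :=
          (continuous_id.smul continuous_const).tendsto 0
        rw [zero_smul] at this
        exact this.mono_left nhdsWithin_le_nhds
      have hφlim : Tendsto (fun h : ℝ => φ (h • u)) (nhdsWithin 0 (Set.Ioi 0))
          (nhds x) := (hφ.continuous.tendsto 0).comp hsmul0
      have hKlim : Tendsto (fun h : ℝ => K (h⁻¹ • (φ (h • u) - x)) ^ 2)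
          (nhdsWithin 0 (Set.Ioi 0)) (nhds (K (L u) ^ 2)) :=
        (((hK_cont.tendsto _).comp hslope).pow 2)
      have halim : Tendsto (fun h : ℝ => (h⁻¹ • (φ (h • u) - x)) a)
          (nhdsWithin 0 (Set.Ioi 0)) (nhds (L u a)) :=
        ((EuclideanSpace.proj a).continuous.tendsto _).comp hslope
      have hblim : Tendsto (fun h : ℝ => (h⁻¹ • (φ (h • u) - x)) b)
          (nhdsWithin 0 (Set.Ioi 0)) (nhds (L u b)) :=
        ((EuclideanSpace.proj b).continuous.tendsto _).comp hslope
      have hvlim : Tendsto (fun h : ℝ => v (φ (h • u))) (nhdsWithin 0 (Set.Ioi 0))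
          (nhds (v x)) := hv_cont.tendsto.comp hφlim
      have hflim : Tendsto (fun h : ℝ => f (h • u)) (nhdsWithin 0 (Set.Ioi 0))
          (nhds (f 0)) := hf_cont.tendsto.comp hsmul0
      have hglim : Tendsto (fun h : ℝ => g h (h • u)) (nhdsWithin 0 (Set.Ioi 0))
          (nhds (lim u)) := ((hKlim.mul (halim.mul hblim)).mul hvlim).mul hflim
      refine hglim.congr' ?_
      filter_upwards [hmem] with h hm
      exact (Set.indicator_of_mem hm _).symm
  -- compute the limit integral
  have hlim_int : ∫ u, lim u = f 0 * v x * ∫ u, K (L u) ^ 2 * (L u a * L u b) := by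
    simp only [hlim]
    rw [integral_mul_const, integral_mul_const]
    ring
  rw [hlim_int] at key
  refine key.congr' ?_
  filter_upwards [self_mem_nhdsWithin] with h hh
  have hh0 : (0:ℝ) < h := hh
  have hhne : (h:ℝ) ≠ 0 := ne_of_gt hh0
  have cov : ∫ u, G h u
      = |(h ^ Module.finrank ℝ (EuclideanSpace ℝ (Fin d)))⁻¹| •
        ∫ z, S.indicator (g h) z :=
    Measure.integral_comp_smul volume (S.indicator (g h)) h
  rw [integral_indicator measurableSet_closedBall] at cov
  have hfr : Module.finrank ℝ (EuclideanSpace ℝ (Fin d)) = d :=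
    finrank_euclideanSpace_fin
  rw [hfr] at cov
  have habs : |(h ^ d)⁻¹| = (h ^ d)⁻¹ := abs_of_pos (by positivity)
  rw [habs, smul_eq_mul] at cov
  have hset : ∫ z in S, g h z
      = h⁻¹ * h⁻¹ * ∫ z in S,
          K (h⁻¹ • (φ z - x)) ^ 2 * ((φ z - x) a * (φ z - x) b) * v (φ z) * f z := by
    rw [← integral_const_mul]
    apply integral_congr_ae
    apply ae_of_all
    intro z
    simp only [hg, PiLp.smul_apply, smul_eq_mul]
    ring
  rw [hset] at cov
  have halg : ∀ I : ℝ, (h ^ d)⁻¹ * (h⁻¹ * h⁻¹ * I) = I / h ^ (d + 2) := by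
    intro I
    rw [pow_add, pow_two]
    field_simp
  exact cov.trans (halg _)
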